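/- Let N = 6 and Θ₆ = (6,3,2,1). For k ∈ Θ₆ let L_{6,k} = Sp₄(ℚ) ∩ g_k⁻¹ Sp₄(ℤ) g_k where g_k = diag(6, 6k, k, 1). Then the intersection ⋂_{k ∈ Θ₆} L_{6,k} equals the group P₆ of matrices M ∈ Sp₄(ℚ) whose (i,j)-entries satisfy: diagonal entries in ℤ, m₁₂ ∈ 6ℤ, m₁₃ ∈ ℤ, m₁₄ ∈ (1/6)ℤ, m₂₁ ∈ ℤ, m₂₃ ∈ (1/6)ℤ, m₂₄ ∈ (1/6)ℤ, m₃₁ ∈ 6ℤ, m₃₂ ∈ 6ℤ, m₃₄ ∈ ℤ, m₄₁ ∈ 6ℤ, m₄₂ ∈ 36ℤ, m₄₃ ∈ 6ℤ. -/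

import Mathlib

open Matrix

/-- The standard symplectic form over `ℚ`. -/
def J4Q : Matrix (Fin 4) (Fin 4) ℚ :=
  !![0, 0, 1, 0; 0, 0, 0, 1; -1, 0, 0, 0; 0, -1, 0, 0]

/-- The standard symplectic form over `ℤ`. -/
def J4Z : Matrix (Fin 4) (Fin 4) ℤ :=
  !![0, 0, 1, 0; 0, 0, 0, 1; -1, 0, 0, 0; 0, -1, 0, 0]

/-- The diagonal matrix `g_k = diag(6, 6k, k, 1)`. -/
def gSix (k : ℕ) : Matrix (Fin 4) (Fin 4) ℚ :=
  Matrix.diagonal ![(6 : ℚ), 6 * (k : ℚ), (k : ℚ), 1]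

/-- `M ∈ L_{6,k} = Sp₄(ℚ) ∩ g_k⁻¹ Sp₄(ℤ) g_k`, for `M` already symplectic:
`g_k M g_k⁻¹` is an integral symplectic matrix (phrased as `g_k M = A g_k`). -/
def MemL6 (k : ℕ) (M : Matrix (Fin 4) (Fin 4) ℚ) : Prop :=
  ∃ A : Matrix (Fin 4) (Fin 4) ℤ, Aᵀ * J4Z * A = J4Z ∧
    gSix k * M = A.map (Int.cast : ℤ → ℚ) * gSix k

lemma J4Z_map : (J4Z.map (Int.cast : ℤ → ℚ)) = J4Q := by
  ext i j
  fin_cases i <;> fin_cases j <;>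
    simp [J4Z, J4Q, Matrix.vecHead, Matrix.vecTail]

lemma symp_descend (A : Matrix (Fin 4) (Fin 4) ℤ)
    (h : (A.map (Int.cast : ℤ → ℚ))ᵀ * J4Q * A.map (Int.cast : ℤ → ℚ) = J4Q) :
    Aᵀ * J4Z * A = J4Z := by
  apply Matrix.map_injective (Int.cast_injective (α := ℚ))
  show (Aᵀ * J4Z * A).map ⇑(Int.castRingHom ℚ) = J4Z.map ⇑(Int.castRingHom ℚ)
  rw [Matrix.map_mul, Matrix.map_mul]
  show Aᵀ.map (Int.cast : ℤ → ℚ) * J4Z.map (Int.cast : ℤ → ℚ) * A.map (Int.cast : ℤ → ℚ)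
      = J4Z.map (Int.cast : ℤ → ℚ)
  rw [Matrix.transpose_map, J4Z_map, h]

lemma conj_symp (d : Fin 4 → ℚ) (hd : ∀ i, d i ≠ 0) (hc : d 0 * d 2 = d 1 * d 3)
    (M B : Matrix (Fin 4) (Fin 4) ℚ) (hM : Mᵀ * J4Q * M = J4Q)
    (hB : diagonal d * M = B * diagonal d) : Bᵀ * J4Q * B = J4Q := by
  set g := diagonal d with hg
  have hJ : g * J4Q * g = (d 0 * d 2) • J4Q := by
    ext i j
    rw [Matrix.smul_apply, Matrix.mul_diagonal, Matrix.diagonal_mul]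
    fin_cases i <;> fin_cases j <;>
      simp [J4Q, Matrix.vecHead, Matrix.vecTail] <;> linarith [hc]
  have key : g * (Bᵀ * J4Q * B) * g = g * J4Q * g := by
    have h3 : (B * g)ᵀ * J4Q * (B * g) = g * (Bᵀ * J4Q * B) * g := by
      rw [Matrix.transpose_mul, hg, Matrix.diagonal_transpose, ← hg]
      simp only [Matrix.mul_assoc]
    rw [← h3, ← hB, Matrix.transpose_mul, hg, Matrix.diagonal_transpose, ← hg]
    calc Mᵀ * g * J4Q * (g * M) = Mᵀ * (g * J4Q * g) * M := by
          simp only [Matrix.mul_assoc]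
      _ = (d 0 * d 2) • (Mᵀ * J4Q * M) := by
          rw [hJ, Matrix.mul_smul, Matrix.smul_mul]
      _ = (d 0 * d 2) • J4Q := by rw [hM]
      _ = g * J4Q * g := hJ.symm
  set g' := diagonal (fun i => (d i)⁻¹) with hg'
  have hgg' : g * g' = 1 := by
    rw [hg, hg', Matrix.diagonal_mul_diagonal]
    rw [show (fun i => d i * (d i)⁻¹) = fun _ => (1:ℚ) from
      funext fun i => mul_inv_cancel₀ (hd i)]
    exact Matrix.diagonal_one
  have hg'g : g' * g = 1 := by
    rw [hg, hg', Matrix.diagonal_mul_diagonal]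
    rw [show (fun i => (d i)⁻¹ * d i) = fun _ => (1:ℚ) from
      funext fun i => inv_mul_cancel₀ (hd i)]
    exact Matrix.diagonal_one
  have e : ∀ X : Matrix (Fin 4) (Fin 4) ℚ, g' * (g * X * g) * g' = X := by
    intro X
    calc g' * (g * X * g) * g' = (g' * g) * X * (g * g') := by
          simp only [Matrix.mul_assoc]
      _ = X := by rw [hg'g, hgg', Matrix.one_mul, Matrix.mul_one]
  rw [← e (Bᵀ * J4Q * B), key, e J4Q]

lemma entry_eq {k : ℕ} {M : Matrix (Fin 4) (Fin 4) ℚ} {A : Matrix (Fin 4) (Fin 4) ℤ}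
    (h : gSix k * M = A.map (Int.cast : ℤ → ℚ) * gSix k) (i j : Fin 4) :
    (![(6:ℚ), 6 * (k:ℚ), (k:ℚ), 1] i) * M i j
      = (A i j : ℚ) * (![(6:ℚ), 6 * (k:ℚ), (k:ℚ), 1] j) := by
  have := congrFun (congrFun h i) j
  simpa [gSix, Matrix.diagonal_mul, Matrix.mul_diagonal, Matrix.map_apply] using this

/-- for `N = 6`, `Θ₆ = (6,3,2,1)`, a symplectic matrix
`M ∈ Sp₄(ℚ)` lies in `⋂_{k ∈ Θ₆} L_{6,k}` iff it lies in `P₆`, i.e. iff its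
entries satisfy the stated integrality conditions. -/
theorem intersection_L6_eq_P6 (M : Matrix (Fin 4) (Fin 4) ℚ)
    (hM : Mᵀ * J4Q * M = J4Q) :
    (∀ k ∈ ([6, 3, 2, 1] : List ℕ), MemL6 k M) ↔
      ((∃ n : ℤ, M 0 0 = n) ∧ (∃ n : ℤ, M 1 1 = n) ∧ (∃ n : ℤ, M 2 2 = n) ∧
        (∃ n : ℤ, M 3 3 = n) ∧
        (∃ n : ℤ, M 0 1 = 6 * n) ∧
        (∃ n : ℤ, M 0 2 = n) ∧
        (∃ n : ℤ, M 0 3 = (1 / 6 : ℚ) * n) ∧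
        (∃ n : ℤ, M 1 0 = n) ∧
        (∃ n : ℤ, M 1 2 = (1 / 6 : ℚ) * n) ∧
        (∃ n : ℤ, M 1 3 = (1 / 6 : ℚ) * n) ∧
        (∃ n : ℤ, M 2 0 = 6 * n) ∧
        (∃ n : ℤ, M 2 1 = 6 * n) ∧
        (∃ n : ℤ, M 2 3 = n) ∧
        (∃ n : ℤ, M 3 0 = 6 * n) ∧
        (∃ n : ℤ, M 3 1 = 36 * n) ∧
        (∃ n : ℤ, M 3 2 = 6 * n)) := by
  constructor
  · intro h
    obtain ⟨A6, -, h6⟩ := h 6 (by norm_num)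
    obtain ⟨A1, -, h1⟩ := h 1 (by norm_num)
    refine ⟨⟨A6 0 0, ?_⟩, ⟨A6 1 1, ?_⟩, ⟨A6 2 2, ?_⟩, ⟨A6 3 3, ?_⟩,
      ⟨A6 0 1, ?_⟩, ⟨A6 0 2, ?_⟩, ⟨A6 0 3, ?_⟩, ⟨A1 1 0, ?_⟩,
      ⟨A6 1 2, ?_⟩, ⟨A1 1 3, ?_⟩, ⟨A1 2 0, ?_⟩, ⟨A1 2 1, ?_⟩,
      ⟨A1 2 3, ?_⟩, ⟨A6 3 0, ?_⟩, ⟨A6 3 1, ?_⟩, ⟨A6 3 2, ?_⟩⟩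
    · have := entry_eq h6 0 0; norm_num [Matrix.vecHead, Matrix.vecTail] at this; linarith
    · have := entry_eq h6 1 1; norm_num [Matrix.vecHead, Matrix.vecTail] at this; linarith
    · have := entry_eq h6 2 2; norm_num [Matrix.vecHead, Matrix.vecTail, Matrix.cons_val_two, Matrix.cons_val_three] at this; linarith
    · have := entry_eq h6 3 3; norm_num [Matrix.vecHead, Matrix.vecTail, Matrix.cons_val_two, Matrix.cons_val_three] at this; linarith
    · have := entry_eq h6 0 1; norm_num [Matrix.vecHead, Matrix.vecTail] at this; linarith
    · have := entry_eq h6 0 2; norm_num [Matrix.vecHead, Matrix.vecTail, Matrix.cons_val_two, Matrix.cons_val_three] at this; linarith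
    · have := entry_eq h6 0 3; norm_num [Matrix.vecHead, Matrix.vecTail, Matrix.cons_val_two, Matrix.cons_val_three] at this; linarith
    · have := entry_eq h1 1 0; norm_num [Matrix.vecHead, Matrix.vecTail] at this; linarith
    · have := entry_eq h6 1 2; norm_num [Matrix.vecHead, Matrix.vecTail, Matrix.cons_val_two, Matrix.cons_val_three] at this; linarith
    · have := entry_eq h1 1 3; norm_num [Matrix.vecHead, Matrix.vecTail, Matrix.cons_val_two, Matrix.cons_val_three] at this; linarith
    · have := entry_eq h1 2 0; norm_num [Matrix.vecHead, Matrix.vecTail, Matrix.cons_val_two, Matrix.cons_val_three] at this; linarith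
    · have := entry_eq h1 2 1; norm_num [Matrix.vecHead, Matrix.vecTail, Matrix.cons_val_two, Matrix.cons_val_three] at this; linarith
    · have := entry_eq h1 2 3; norm_num [Matrix.vecHead, Matrix.vecTail, Matrix.cons_val_two, Matrix.cons_val_three] at this; linarith
    · have := entry_eq h6 3 0; norm_num [Matrix.vecHead, Matrix.vecTail, Matrix.cons_val_two, Matrix.cons_val_three] at this; linarith
    · have := entry_eq h6 3 1; norm_num [Matrix.vecHead, Matrix.vecTail, Matrix.cons_val_two, Matrix.cons_val_three] at this; linarith
    · have := entry_eq h6 3 2; norm_num [Matrix.vecHead, Matrix.vecTail, Matrix.cons_val_two, Matrix.cons_val_three] at this; linarith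
  · rintro ⟨⟨n00, h00⟩, ⟨n11, h11⟩, ⟨n22, h22⟩, ⟨n33, h33⟩, ⟨n01, h01⟩, ⟨n02, h02⟩,
      ⟨n03, h03⟩, ⟨n10, h10⟩, ⟨n12, h12⟩, ⟨n13, h13⟩, ⟨n20, h20⟩, ⟨n21, h21⟩,
      ⟨n23, h23⟩, ⟨n30, h30⟩, ⟨n31, h31⟩, ⟨n32, h32⟩⟩ k hk
    fin_cases hk
    · -- k = 6
      have hB : gSix 6 * M =
          (!![n00, n01, n02, n03; 6*n10, n11, n12, 6*n13;
             6*n20, n21, n22, 6*n23; n30, n31, n32, n33]).map (Int.cast : ℤ → ℚ)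
            * gSix 6 := by
        ext i j
        simp only [gSix, Matrix.diagonal_mul, Matrix.mul_diagonal]
        fin_cases i <;> fin_cases j <;>
          simp [Matrix.map_apply, Matrix.vecHead, Matrix.vecTail,
            h00, h11, h22, h33, h01, h02, h03, h10, h12, h13, h20, h21, h23,
            h30, h31, h32] <;> push_cast <;> ring
      exact ⟨_, symp_descend _
        (conj_symp _ (by intro i; fin_cases i <;> norm_num [Matrix.vecHead, Matrix.vecTail])
          (by norm_num [Matrix.vecHead, Matrix.vecTail, Matrix.cons_val_two, Matrix.cons_val_three]) M _ hM hB), hB⟩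
    · -- k = 3
      have hB : gSix 3 * M =
          (!![n00, 2*n01, 2*n02, n03; 3*n10, n11, n12, 3*n13;
             3*n20, n21, n22, 3*n23; n30, 2*n31, 2*n32, n33]).map (Int.cast : ℤ → ℚ)
            * gSix 3 := by
        ext i j
        simp only [gSix, Matrix.diagonal_mul, Matrix.mul_diagonal]
        fin_cases i <;> fin_cases j <;>
          simp [Matrix.map_apply, Matrix.vecHead, Matrix.vecTail,
            h00, h11, h22, h33, h01, h02, h03, h10, h12, h13, h20, h21, h23,
            h30, h31, h32] <;> push_cast <;> ring
      exact ⟨_, symp_descend _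
        (conj_symp _ (by intro i; fin_cases i <;> norm_num [Matrix.vecHead, Matrix.vecTail])
          (by norm_num [Matrix.vecHead, Matrix.vecTail, Matrix.cons_val_two, Matrix.cons_val_three]) M _ hM hB), hB⟩
    · -- k = 2
      have hB : gSix 2 * M =
          (!![n00, 3*n01, 3*n02, n03; 2*n10, n11, n12, 2*n13;
             2*n20, n21, n22, 2*n23; n30, 3*n31, 3*n32, n33]).map (Int.cast : ℤ → ℚ)
            * gSix 2 := by
        ext i j
        simp only [gSix, Matrix.diagonal_mul, Matrix.mul_diagonal]
        fin_cases i <;> fin_cases j <;>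
          simp [Matrix.map_apply, Matrix.vecHead, Matrix.vecTail,
            h00, h11, h22, h33, h01, h02, h03, h10, h12, h13, h20, h21, h23,
            h30, h31, h32] <;> push_cast <;> ring
      exact ⟨_, symp_descend _
        (conj_symp _ (by intro i; fin_cases i <;> norm_num [Matrix.vecHead, Matrix.vecTail])
          (by norm_num [Matrix.vecHead, Matrix.vecTail, Matrix.cons_val_two, Matrix.cons_val_three]) M _ hM hB), hB⟩
    · -- k = 1
      have hB : gSix 1 * M =
          (!![n00, 6*n01, 6*n02, n03; n10, n11, n12, n13;
             n20, n21, n22, n23; n30, 6*n31, 6*n32, n33]).map (Int.cast : ℤ → ℚ)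
            * gSix 1 := by
        ext i j
        simp only [gSix, Matrix.diagonal_mul, Matrix.mul_diagonal]
        fin_cases i <;> fin_cases j <;>
          simp [Matrix.map_apply, Matrix.vecHead, Matrix.vecTail,
            h00, h11, h22, h33, h01, h02, h03, h10, h12, h13, h20, h21, h23,
            h30, h31, h32] <;> push_cast <;> ring
      exact ⟨_, symp_descend _
        (conj_symp _ (by intro i; fin_cases i <;> norm_num [Matrix.vecHead, Matrix.vecTail])
          (by norm_num [Matrix.vecHead, Matrix.vecTail, Matrix.cons_val_two, Matrix.cons_val_three]) M _ hM hB), hB⟩
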